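/- Let (X,d̂) be a metric space and suppose there are constants δ₁, C' ≥ 0 and a map m : X × X → X such that for all x,y ∈ X: |d̂(x,m(x,y)) − d̂(x,y)/2| ≤ δ₁, |d̂(m(x,y),y) − d̂(x,y)/2| ≤ δ₁, and for all z ∈ X, d̂(z,m(x,y)) + d̂(x,y) ≤ sup{d̂(x,z) + d̂(y,m(x,y)), d̂(y,z) + d̂(x,m(x,y))} + C'. Then setting δ₂ := (δ₁ + C')/2, for all x,y,z ∈ X: 2·d̂(z,m(x,y)) ≤ (2·d̂(x,z)² + 2·d̂(y,z)² − d̂(x,y)²)^{1/2} + 4δ₂. -/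

import Mathlib

theorem bolicity_B2 {X : Type*} [MetricSpace X]
    (δ₁ C' : ℝ) (hδ₁ : 0 ≤ δ₁) (hC' : 0 ≤ C')
    (m : X → X → X)
    (hm₁ : ∀ x y : X, |dist x (m x y) - dist x y / 2| ≤ δ₁)
    (hm₂ : ∀ x y : X, |dist (m x y) y - dist x y / 2| ≤ δ₁)
    (hm₃ : ∀ x y z : X, dist z (m x y) + dist x y ≤
      max (dist x z + dist y (m x y)) (dist y z + dist x (m x y)) + C') :
    ∀ x y z : X, 2 * dist z (m x y) ≤
      Real.sqrt (2 * dist x z ^ 2 + 2 * dist y z ^ 2 - dist x y ^ 2) +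
        4 * ((δ₁ + C') / 2) := by
  intro x y z
  set a := dist x z with ha
  set b := dist y z with hb
  set D := dist x y with hD
  have h1 := hm₁ x y
  have h2 := hm₂ x y
  have h3 := hm₃ x y z
  have hym : dist y (m x y) ≤ D / 2 + δ₁ := by
    rw [dist_comm]
    have := abs_le.1 h2
    linarith [this.2]
  have hxm : dist x (m x y) ≤ D / 2 + δ₁ := by
    have := abs_le.1 h1
    linarith [this.2]
  have hmax : max (dist x z + dist y (m x y)) (dist y z + dist x (m x y)) ≤
      max a b + (D / 2 + δ₁) := by
    apply max_le
    · exact le_trans (add_le_add (le_max_left a b) hym) le_rfl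
    · exact le_trans (add_le_add (le_max_right a b) hxm) le_rfl
  have key : 2 * dist z (m x y) ≤ 2 * max a b - D + 2 * (δ₁ + C') := by
    have := le_trans h3 (add_le_add_left hmax C')
    linarith
  have htri1 : D ≤ a + b := by rw [ha, hb, hD, dist_comm y z]; exact dist_triangle x z y
  have htri2 : a ≤ D + b := by rw [ha, hb, hD]; exact dist_triangle x y z
  have htri3 : b ≤ D + a := by
    rw [ha, hb, hD, dist_comm x y]
    exact dist_triangle y x z
  have hstep : 2 * max a b - D ≤ Real.sqrt (2 * a ^ 2 + 2 * b ^ 2 - D ^ 2) := by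
    rcases le_or_gt (2 * max a b - D) 0 with h | h
    · exact le_trans h (Real.sqrt_nonneg _)
    · rw [show (2 * max a b - D) = Real.sqrt ((2 * max a b - D) ^ 2) from
        (Real.sqrt_sq h.le).symm]
      apply Real.sqrt_le_sqrt
      rcases max_cases a b with ⟨he, hab⟩ | ⟨he, hab⟩ <;> rw [he] <;> nlinarith
  linarith
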